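/- arXiv:2603.07088 — 2 statements merged into one kernel-verified Lean document; each statement's English description precedes it below -/
import Mathlib

section
/- Let n ≥ 2 and let z : Fin n → ℂ be admissible with Δ(z) = Δmax(n) (a maximizer). Then the diameter graph of z, i.e. the simple graph G on Fin n in which i is adjacent to j if and only if i ≠ j and dist (z i) (z j) = 2, is connected. -/
/-- The product over all ordered pairs `(i,j)` with `i ≠ j` of `dist (z i) (z j)`. -/
noncomputable def Delta (n : ℕ) (z : Fin n → ℂ) : ℝ :=
  ∏ p ∈ Finset.univ.filter (fun p : Fin n × Fin n => p.1 ≠ p.2), dist (z p.1) (z p.2)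

/-- `z` is admissible if all pairwise distances are at most 2. -/
def Admissible (n : ℕ) (z : Fin n → ℂ) : Prop :=
  ∀ i j, dist (z i) (z j) ≤ 2

/-- The maximal discriminant over admissible configurations. -/
noncomputable def Dmax (n : ℕ) : ℝ :=
  sSup {d : ℝ | ∃ z : Fin n → ℂ, Admissible n z ∧ Delta n z = d}

/-- The diameter graph of a configuration: `i` adjacent to `j` iff `i ≠ j` and
`dist (z i) (z j) = 2`. -/
def diamGraph (n : ℕ) (z : Fin n → ℂ) : SimpleGraph (Fin n) where
  Adj i j := i ≠ j ∧ dist (z i) (z j) = 2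
  symm := ⟨fun i j h => ⟨h.1.symm, by rw [dist_comm]; exact h.2⟩⟩
  loopless := ⟨fun i h => h.1 rfl⟩

lemma delta_bddAbove (n : ℕ) :
    BddAbove {d : ℝ | ∃ z : Fin n → ℂ, Admissible n z ∧ Delta n z = d} := by
  refine ⟨2 ^ (n * n), ?_⟩
  rintro d ⟨w, hw, rfl⟩
  calc Delta n w
      ≤ ∏ _p ∈ Finset.univ.filter (fun p : Fin n × Fin n => p.1 ≠ p.2), (2:ℝ) :=
        Finset.prod_le_prod (fun p _ => dist_nonneg) (fun p _ => hw p.1 p.2)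
    _ = 2 ^ (Finset.univ.filter (fun p : Fin n × Fin n => p.1 ≠ p.2)).card :=
        Finset.prod_const _
    _ ≤ 2 ^ (n * n) := by
        apply pow_le_pow_right₀ one_le_two
        calc (Finset.univ.filter (fun p : Fin n × Fin n => p.1 ≠ p.2)).card
            ≤ (Finset.univ : Finset (Fin n × Fin n)).card := Finset.card_filter_le _ _
          _ = n * n := by simp

lemma dmax_pos (n : ℕ) (hn : 1 ≤ n) : 0 < Dmax n := by
  have hn0 : (0:ℝ) < n := by exact_mod_cast hn
  set w : Fin n → ℂ := fun k => ((k : ℝ) / n : ℝ) with hw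
  have hdist : ∀ a b : Fin n, dist (w a) (w b) = |(a:ℝ)/n - (b:ℝ)/n| := by
    intro a b
    simp only [hw]
    rw [Complex.isometry_ofReal.dist_eq, Real.dist_eq]
  have hadm : Admissible n w := by
    intro a b
    rw [hdist]
    have ha : (a:ℝ) < n := by exact_mod_cast a.isLt
    have hb : (b:ℝ) < n := by exact_mod_cast b.isLt
    have ha0 : (0:ℝ) ≤ a := Nat.cast_nonneg _
    have hb0 : (0:ℝ) ≤ b := Nat.cast_nonneg _
    have h1 : (a:ℝ)/n ≤ 1 := by rw [div_le_one hn0]; linarith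
    have h2 : (b:ℝ)/n ≤ 1 := by rw [div_le_one hn0]; linarith
    have h3 : 0 ≤ (a:ℝ)/n := by positivity
    have h4 : 0 ≤ (b:ℝ)/n := by positivity
    rw [abs_le]
    constructor <;> linarith
  have hpos : 0 < Delta n w := by
    apply Finset.prod_pos
    intro p hp
    rw [Finset.mem_filter] at hp
    rw [dist_pos]
    intro hcontra
    apply hp.2
    have h1 : ((p.1:ℝ)/n : ℝ) = ((p.2:ℝ)/n : ℝ) := Complex.ofReal_inj.mp hcontra
    field_simp at h1
    have h3 : (p.1 : ℕ) = (p.2 : ℕ) := by exact_mod_cast h1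
    exact Fin.ext h3
  have hle : Delta n w ≤ Dmax n := le_csSup (delta_bddAbove n) ⟨w, hadm, rfl⟩
  linarith

set_option maxHeartbeats 1000000 in
theorem stmt5 (n : ℕ) (hn : 2 ≤ n) (z : Fin n → ℂ)
    (hadm : Admissible n z) (hmax : Delta n z = Dmax n) :
    (diamGraph n z).Connected := by
  classical
  by_contra hcon
  have hne : Nonempty (Fin n) := ⟨⟨0, by omega⟩⟩
  obtain ⟨i, j, hij⟩ : ∃ i j, ¬ (diamGraph n z).Reachable i j := by
    by_contra h
    push_neg at h
    exact hcon ⟨h⟩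
  set S : Fin n → Prop := fun v => (diamGraph n z).Reachable i v with hS
  have hiS : S i := SimpleGraph.Reachable.refl i
  have hjS : ¬ S j := hij
  have hijne : i ≠ j := fun h => hjS (h ▸ hiS)
  have hcross : ∀ u v, S u → ¬ S v → dist (z u) (z v) < 2 := by
    intro u v hu hv
    rcases lt_or_eq_of_le (hadm u v) with h | h
    · exact h
    · exfalso
      apply hv
      have huv : u ≠ v := fun e => hv (e ▸ hu)
      exact hu.trans (SimpleGraph.Adj.reachable (show u ≠ v ∧ dist (z u) (z v) = 2 from ⟨huv, h⟩))
  -- pair sets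
  set pairs : Finset (Fin n × Fin n) :=
    Finset.univ.filter (fun p : Fin n × Fin n => p.1 ≠ p.2) with hpairs
  set q : Fin n × Fin n → Prop := fun p => S p.1 ↔ S p.2 with hq
  set A : Finset (Fin n × Fin n) := pairs.filter q with hA
  set B : Finset (Fin n × Fin n) := pairs.filter (fun p => ¬ q p) with hB
  have hmemB : ∀ p : Fin n × Fin n, p ∈ B ↔ (p.1 ≠ p.2 ∧ ¬ (S p.1 ↔ S p.2)) := by
    intro p
    simp [hB, hpairs, hq, Finset.mem_filter]
  have hmemA : ∀ p : Fin n × Fin n, p ∈ A ↔ (p.1 ≠ p.2 ∧ (S p.1 ↔ S p.2)) := by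
    intro p
    simp [hA, hpairs, hq, Finset.mem_filter]
  have hBne : (i, j) ∈ B := by
    rw [hmemB]
    exact ⟨hijne, fun h => hjS (h.mp hiS)⟩
  -- split of Delta
  have hsplit : ∀ w : Fin n → ℂ,
      Delta n w = (∏ p ∈ A, dist (w p.1) (w p.2)) * (∏ p ∈ B, dist (w p.1) (w p.2)) := by
    intro w
    rw [hA, hB, Finset.prod_filter_mul_prod_filter_not]
    rfl
  -- the translated configurations
  set ztf : ℂ → Fin n → ℂ := fun t v => if S v then z v + t else z v with hztf
  have hztf0 : ztf 0 = z := by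
    funext v
    by_cases h : S v <;> simp [hztf, h]
  -- the polynomial
  set P : Polynomial ℂ :=
    ∏ p ∈ B, (if S p.1 then Polynomial.X + Polynomial.C (z p.1 - z p.2)
      else Polynomial.C (z p.1 - z p.2) - Polynomial.X) with hP
  have hsides : ∀ p ∈ B, (S p.1 ∧ ¬ S p.2) ∨ (¬ S p.1 ∧ S p.2) := by
    intro p hp
    rw [hmemB] at hp
    by_cases h1 : S p.1
    · exact Or.inl ⟨h1, fun h2 => hp.2 ⟨fun _ => h2, fun _ => h1⟩⟩
    · refine Or.inr ⟨h1, ?_⟩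
      by_contra h2
      exact hp.2 ⟨fun h => absurd h h1, fun h => absurd h h2⟩
  have hEval : ∀ t : ℂ, ‖P.eval t‖ = ∏ p ∈ B, dist (ztf t p.1) (ztf t p.2) := by
    intro t
    rw [hP, Polynomial.eval_prod, norm_prod]
    apply Finset.prod_congr rfl
    intro p hp
    rcases hsides p hp with ⟨h1, h2⟩ | ⟨h1, h2⟩
    · simp only [hztf, if_pos h1, if_neg h2, Polynomial.eval_add, Polynomial.eval_X,
        Polynomial.eval_C, dist_eq_norm]
      congr 1
      ring
    · simp only [hztf, if_neg h1, if_pos h2, Polynomial.eval_sub, Polynomial.eval_X,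
        Polynomial.eval_C, dist_eq_norm]
      congr 1
      ring
  -- positive degree
  have hfne : ∀ p ∈ B, (if S p.1 then Polynomial.X + Polynomial.C (z p.1 - z p.2)
      else Polynomial.C (z p.1 - z p.2) - Polynomial.X) ≠ 0 := by
    intro p _
    by_cases h : S p.1
    · rw [if_pos h]
      exact Polynomial.X_add_C_ne_zero (z p.1 - z p.2)
    · rw [if_neg h]
      intro hc
      have : Polynomial.X - Polynomial.C (z p.1 - z p.2) = 0 := by
        have := congrArg Neg.neg hc
        simpa [neg_sub] using this
      exact Polynomial.X_sub_C_ne_zero (z p.1 - z p.2) this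
  have hdeg : 0 < P.natDegree := by
    rw [hP, Polynomial.natDegree_prod _ _ hfne]
    have : ∀ p ∈ B, (if S p.1 then Polynomial.X + Polynomial.C (z p.1 - z p.2)
        else Polynomial.C (z p.1 - z p.2) - Polynomial.X).natDegree = 1 := by
      intro p _
      by_cases h : S p.1
      · rw [if_pos h]
        exact Polynomial.natDegree_X_add_C _
      · rw [if_neg h]
        have : Polynomial.C (z p.1 - z p.2) - Polynomial.X
            = -(Polynomial.X - Polynomial.C (z p.1 - z p.2)) := by ring
        rw [this, Polynomial.natDegree_neg]
        exact Polynomial.natDegree_X_sub_C _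
    rw [Finset.sum_congr rfl this, Finset.sum_const, smul_eq_mul, mul_one]
    exact Finset.card_pos.mpr ⟨(i, j), hBne⟩
  -- maximum modulus: we can increase |P| nearby
  have key : ∀ ε : ℝ, 0 < ε → ∃ t : ℂ, ‖t‖ < ε ∧ ‖P.eval 0‖ < ‖P.eval t‖ := by
    intro ε hε
    by_contra hcon2
    push_neg at hcon2
    have hloc : IsLocalMax (norm ∘ fun t : ℂ => P.eval t) 0 := by
      filter_upwards [Metric.ball_mem_nhds (0:ℂ) hε] with t ht
      have : ‖t‖ < ε := by simpa [dist_eq_norm] using ht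
      simpa using hcon2 t this
    have heq := Complex.eventually_eq_of_isLocalMax_norm
      (Filter.Eventually.of_forall fun t : ℂ => P.differentiable.differentiableAt) hloc
    have hQ : P - Polynomial.C (P.eval 0) = 0 := by
      apply Polynomial.eq_zero_of_infinite_isRoot
      obtain ⟨r, hr, hball⟩ := Metric.eventually_nhds_iff.mp heq
      apply Set.infinite_of_injective_forall_mem
        (f := fun k : ℕ => ((r / (k + 2) : ℝ) : ℂ))
      case hi =>
        intro a b hab
        simp only [Complex.ofReal_inj] at hab
        have h1 : (r / ((a:ℝ) + 2) : ℝ) = (r / ((b:ℝ) + 2) : ℝ) := by exact_mod_cast hab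
        have ha : (0:ℝ) < a + 2 := by positivity
        have hb : (0:ℝ) < b + 2 := by positivity
        have : ((a:ℝ) + 2) = ((b:ℝ) + 2) := by
          rw [div_eq_div_iff ha.ne' hb.ne'] at h1
          have h2 := mul_left_cancel₀ (ne_of_gt hr) h1
          linarith
        have : (a:ℝ) = b := by linarith
        exact_mod_cast this
      case hf =>
        intro k
        have hk : (0:ℝ) < (k:ℝ) + 2 := by positivity
        have hd : dist ((r / (k + 2) : ℝ) : ℂ) 0 < r := by
          rw [dist_zero_right]
          rw [Complex.norm_real, Real.norm_eq_abs,
            abs_of_pos (show (0:ℝ) < r / ((k:ℝ) + 2) by positivity), div_lt_iff₀ hk]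
          nlinarith
        have := hball hd
        simp only [Polynomial.IsRoot, Polynomial.eval_sub, Polynomial.eval_C, Set.mem_setOf_eq]
        rw [this]
        ring
    have : P = Polynomial.C (P.eval 0) := by
      have := sub_eq_zero.mp hQ
      exact this
    rw [this, Polynomial.natDegree_C] at hdeg
    exact lt_irrefl 0 hdeg
  -- choose ε from the gap
  have hBnonempty : B.Nonempty := ⟨(i, j), hBne⟩
  obtain ⟨pm, hpmB, hpmmax⟩ :=
    Finset.exists_max_image B (fun p => dist (z p.1) (z p.2)) hBnonempty
  set m : ℝ := dist (z pm.1) (z pm.2) with hm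
  have hmlt : m < 2 := by
    rcases hsides pm hpmB with ⟨h1, h2⟩ | ⟨h1, h2⟩
    · exact hcross pm.1 pm.2 h1 h2
    · rw [hm, dist_comm]
      exact hcross pm.2 pm.1 h2 h1
  obtain ⟨t, htlt, htgt⟩ := key (2 - m) (by linarith)
  -- admissibility of translated configuration
  have hadm' : Admissible n (ztf t) := by
    intro u v
    by_cases hu : S u <;> by_cases hv : S v
    · simp only [hztf, if_pos hu, if_pos hv]
      rw [dist_add_right]
      exact hadm u v
    · simp only [hztf, if_pos hu, if_neg hv]
      have hne1 : u ≠ v := by intro e; subst e; exact hv hu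
      have huv : (u, v) ∈ B := (hmemB (u, v)).mpr ⟨hne1, fun h => hv (h.mp hu)⟩
      have hle : dist (z u) (z v) ≤ m := by rw [hm]; exact hpmmax (u, v) huv
      calc dist (z u + t) (z v) ≤ dist (z u + t) (z u) + dist (z u) (z v) := dist_triangle _ _ _
        _ ≤ ‖t‖ + m := by
            have : dist (z u + t) (z u) = ‖t‖ := by
              rw [dist_eq_norm]
              congr 1
              ring
            rw [this]
            linarith
        _ ≤ 2 := by linarith
    · simp only [hztf, if_neg hu, if_pos hv]
      have hne1 : v ≠ u := by intro e; subst e; exact hu hv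
      have huv : (v, u) ∈ B := (hmemB (v, u)).mpr ⟨hne1, fun h => hu (h.mp hv)⟩
      have hle : dist (z v) (z u) ≤ m := by rw [hm]; exact hpmmax (v, u) huv
      calc dist (z u) (z v + t) = dist (z v + t) (z u) := dist_comm _ _
        _ ≤ dist (z v + t) (z v) + dist (z v) (z u) := dist_triangle _ _ _
        _ ≤ ‖t‖ + m := by
            have : dist (z v + t) (z v) = ‖t‖ := by
              rw [dist_eq_norm]
              congr 1
              ring
            rw [this]
            linarith
        _ ≤ 2 := by linarith
    · simp only [hztf, if_neg hu, if_neg hv]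
      exact hadm u v
  -- within-pairs are translation invariant
  have hwithin : ∀ s : ℂ, ∀ p ∈ A, dist (ztf s p.1) (ztf s p.2) = dist (z p.1) (z p.2) := by
    intro s p hp
    rw [hmemA] at hp
    by_cases h1 : S p.1
    · have h2 : S p.2 := hp.2.mp h1
      simp only [hztf, if_pos h1, if_pos h2, dist_add_right]
    · have h2 : ¬ S p.2 := fun h => h1 (hp.2.mpr h)
      simp only [hztf, if_neg h1, if_neg h2]
  set W : ℝ := ∏ p ∈ A, dist (z p.1) (z p.2) with hW
  have hDelta : ∀ s : ℂ, Delta n (ztf s) = W * ‖P.eval s‖ := by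
    intro s
    rw [hsplit (ztf s), hEval s, hW]
    congr 1
    exact Finset.prod_congr rfl (hwithin s)
  have hD0 : Delta n z = W * ‖P.eval 0‖ := by
    rw [← hztf0, hDelta 0]
  have hDpos : 0 < Dmax n := dmax_pos n (by omega)
  have hWnn : 0 ≤ W := Finset.prod_nonneg (fun p _ => dist_nonneg)
  have hWpos : 0 < W := by
    rcases lt_or_eq_of_le hWnn with h | h
    · exact h
    · exfalso
      rw [← h, zero_mul] at hD0
      rw [hmax] at hD0
      linarith
  have hgt : Dmax n < Delta n (ztf t) := by
    rw [hDelta t, ← hmax, hD0]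
    exact (mul_lt_mul_iff_right₀ hWpos).mpr htgt
  have hle : Delta n (ztf t) ≤ Dmax n := le_csSup (delta_bddAbove n) ⟨ztf t, hadm', rfl⟩
  linarith
end

section
/- Let n ≥ 2 and let z : Fin n → ℂ be admissible with Δ(z) = Δmax(n) (a maximizer). Let G be the diameter graph of z, i.e. the simple graph on Fin n with i adjacent to j iff i ≠ j and dist (z i) (z j) = 2. Then G contains no cycle of even length: for every vertex v and every closed walk w from v to v in G which is a cycle, the length of w is odd. -/
open SimpleGraph

noncomputable def crossAB (a b p : ℂ) : ℝ :=
  (p.re - a.re) * (b.im - a.im) - (p.im - a.im) * (b.re - a.re)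

lemma crossAB_left (a b : ℂ) : crossAB a b a = 0 := by simp [crossAB]

lemma crossAB_right (a b : ℂ) : crossAB a b b = 0 := by simp only [crossAB]; ring

lemma crossAB_combo {a b x y q : ℂ} {α β : ℝ} (hαβ : α + β = 1)
    (hq : q = α • x + β • y) :
    crossAB a b q = α * crossAB a b x + β * crossAB a b y := by
  have hα : α = 1 - β := by linarith
  subst hα hq
  simp only [crossAB, Complex.real_smul, Complex.add_re, Complex.add_im, Complex.mul_re,
    Complex.mul_im, Complex.ofReal_re, Complex.ofReal_im]
  ring

lemma segMk (p q x : ℂ) (α β : ℝ) (hα : 0 ≤ α) (hβ : 0 ≤ β) (hW : 0 < α + β)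
    (hx : ((α + β : ℝ) : ℂ) * x = (α : ℂ) * p + (β : ℂ) * q) : x ∈ segment ℝ p q := by
  have hW' : (α + β : ℝ) ≠ 0 := ne_of_gt hW
  refine ⟨α / (α + β), β / (α + β), by positivity, by positivity, by field_simp, ?_⟩
  simp only [Complex.real_smul]
  push_cast
  rw [div_mul_eq_mul_div, div_mul_eq_mul_div, ← add_div, div_eq_iff (by exact_mod_cast hW')]
  rw [← hx]; push_cast; ring

lemma dist_seg {a c x : ℂ} {t : ℝ} (h0 : 0 ≤ t) (hx : x = (1 - t) • a + t • c) :
    dist a x = t * dist a c := by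
  have h : a - x = t • (a - c) := by rw [hx]; module

  rw [dist_eq_norm, dist_eq_norm, h, norm_smul, Real.norm_eq_abs, abs_of_nonneg h0]

lemma dist_seg' {a c x : ℂ} {α β : ℝ} (hα : 0 ≤ α) (hβ : 0 ≤ β) (hs : α + β = 1)
    (hx : x = α • a + β • c) :
    dist a x = β * dist a c ∧ dist c x = α * dist a c := by
  constructor
  · apply dist_seg hβ; rw [hx]; have h : (1:ℝ) - β = α := by linarith
    rw [h]
  · rw [_root_.dist_comm a c]; apply dist_seg hα; rw [hx]
    have h : (1:ℝ) - α = β := by linarith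
    rw [h]; module

lemma rep_helper (p q x : ℂ) (α β : ℝ) (hW : α + β ≠ 0)
    (hx : ((α + β : ℝ) : ℂ) * x = (α : ℂ) * p + (β : ℂ) * q) :
    x = (α / (α + β)) • p + (β / (α + β)) • q := by
  have hWc : ((α + β : ℝ) : ℂ) ≠ 0 := by exact_mod_cast hW
  simp only [Complex.real_smul]
  push_cast
  rw [div_mul_eq_mul_div, div_mul_eq_mul_div, ← add_div,
    eq_div_iff (by exact_mod_cast hW)]
  push_cast at hx
  linear_combination hx

lemma crossW (a b c d : ℂ) (hab : dist a b = 2) (hcd : dist c d = 2)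
    (hac : dist a c ≤ 2) (hbd : dist b d ≤ 2)
    (wa wb wc wd : ℝ) (h1 : 0 ≤ wa) (h2 : 0 ≤ wb) (h3 : 0 ≤ wc) (h4 : 0 ≤ wd)
    (hW : 0 < wa + wc) (hsum : wa + wc = wb + wd)
    (hrep : (wa : ℂ) * a + (wc : ℂ) * c = (wb : ℂ) * b + (wd : ℂ) * d) :
    ∃ y, y ∈ segment ℝ a b ∧ y ∈ segment ℝ c d := by
  have hW' : wa + wc ≠ 0 := ne_of_gt hW
  have hW2 : wb + wd = wa + wc := hsum.symm
  set x : ℂ := ((wa : ℂ) * a + (wc : ℂ) * c) * (((wa + wc : ℝ) : ℂ))⁻¹ with hxdef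
  have hWc : ((wa + wc : ℝ) : ℂ) ≠ 0 := by exact_mod_cast hW'
  have hx1 : ((wa + wc : ℝ) : ℂ) * x = (wa : ℂ) * a + (wc : ℂ) * c := by
    rw [hxdef, mul_comm, mul_assoc, inv_mul_cancel₀ hWc, mul_one]
  have hx2 : ((wb + wd : ℝ) : ℂ) * x = (wb : ℂ) * b + (wd : ℂ) * d := by
    rw [hW2, hx1, hrep]
  have rep1 := rep_helper a c x wa wc hW' hx1
  have rep2 := rep_helper b d x wb wd (by rw [hW2]; exact hW') hx2
  rw [hW2] at rep2
  -- distances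
  have hs1 : wa / (wa + wc) + wc / (wa + wc) = 1 := by field_simp
  have hs2 : wb / (wa + wc) + wd / (wa + wc) = 1 := by rw [← add_div, ← hsum]; field_simp
  obtain ⟨dax, dcx⟩ := dist_seg' (div_nonneg h1 hW.le) (div_nonneg h3 hW.le) hs1 rep1
  obtain ⟨dbx, ddx⟩ := dist_seg' (div_nonneg h2 hW.le) (div_nonneg h4 hW.le) hs2 rep2
  have tri1 : dist a b ≤ dist a x + dist b x := by
    rw [_root_.dist_comm b x]; exact dist_triangle a x b
  have tri2 : dist c d ≤ dist c x + dist d x := by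
    rw [_root_.dist_comm d x]; exact dist_triangle c x d
  have bnd1 : dist a x ≤ 2 * (wc / (wa + wc)) := by
    rw [dax]; rw [mul_comm 2]; exact mul_le_mul_of_nonneg_left hac (div_nonneg h3 hW.le) -- mul_le_mul_of_nonneg_left hac (div_nonneg h3 hW.le)
  have bnd2 : dist b x ≤ 2 * (wd / (wa + wc)) := by
    rw [dbx]; rw [mul_comm 2]; exact mul_le_mul_of_nonneg_left hbd (div_nonneg h4 hW.le) -- mul_le_mul_of_nonneg_left hbd (div_nonneg h4 hW.le)
  have bnd3 : dist c x ≤ 2 * (wa / (wa + wc)) := by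
    rw [dcx]; rw [mul_comm 2]; exact mul_le_mul_of_nonneg_left hac (div_nonneg h1 hW.le) -- mul_le_mul_of_nonneg_left hac (div_nonneg h1 hW.le)
  have bnd4 : dist d x ≤ 2 * (wb / (wa + wc)) := by
    rw [ddx]; rw [mul_comm 2]; exact mul_le_mul_of_nonneg_left hbd (div_nonneg h2 hW.le) -- mul_le_mul_of_nonneg_left hbd (div_nonneg h2 hW.le)
  have e1 : dist a x + dist x b = dist a b := by
    rw [_root_.dist_comm x b, hab]; linarith
  have e2 : dist c x + dist x d = dist c d := by
    rw [_root_.dist_comm x d, hcd]; linarith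
  exact ⟨x, mem_segment_iff_wbtw.mpr (dist_add_dist_eq_iff.mp e1),
    mem_segment_iff_wbtw.mpr (dist_add_dist_eq_iff.mp e2)⟩

lemma vtxW (a b c d : ℂ) (hab : dist a b = 2) (hcb : dist c b ≤ 2) (hdb : dist d b ≤ 2)
    (wa wb wc wd : ℝ) (hwa : 0 < wa) (h2 : 0 ≤ wb) (h3 : 0 ≤ wc) (h4 : 0 ≤ wd)
    (hsum : wa = wb + wc + wd)
    (hrep : (wa : ℂ) * a = (wb : ℂ) * b + (wc : ℂ) * c + (wd : ℂ) * d) :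
    ∃ y, y ∈ segment ℝ a b ∧ y ∈ segment ℝ c d := by
  have hsC : (wa : ℂ) = (wb : ℂ) + wc + wd := by exact_mod_cast hsum
  have key : wa • (a - b) = wc • (c - b) + wd • (d - b) := by
    simp only [Complex.real_smul]
    linear_combination hrep - b * hsC
  have hn : wa * 2 ≤ wc * 2 + wd * 2 := by
    have h1 : ‖wa • (a - b)‖ = wa * dist a b := by
      rw [norm_smul, Real.norm_eq_abs, abs_of_nonneg hwa.le, dist_eq_norm]
    have h2' : ‖wc • (c - b) + wd • (d - b)‖ ≤ wc * dist c b + wd * dist d b := by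
      refine (norm_add_le _ _).trans ?_
      rw [norm_smul, norm_smul, Real.norm_eq_abs, Real.norm_eq_abs,
        abs_of_nonneg h3, abs_of_nonneg h4, dist_eq_norm, dist_eq_norm]
    have hcb' : wc * dist c b ≤ wc * 2 := mul_le_mul_of_nonneg_left hcb h3
    have hdb' : wd * dist d b ≤ wd * 2 := mul_le_mul_of_nonneg_left hdb h4
    calc wa * 2 = ‖wa • (a - b)‖ := by rw [h1, hab]
    _ = ‖wc • (c - b) + wd • (d - b)‖ := by rw [key]
    _ ≤ wc * dist c b + wd * dist d b := h2'
    _ ≤ wc * 2 + wd * 2 := by linarith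
  have hwb : wb = 0 := by linarith
  have hsum2 : wc + wd = wa := by linarith
  have hrep2 : ((wc + wd : ℝ) : ℂ) * a = (wc : ℂ) * c + (wd : ℂ) * d := by
    push_cast
    rw [hwb] at hrep hsC
    push_cast at hrep hsC
    linear_combination hrep - a * hsC
  refine ⟨a, left_mem_segment ℝ a b, ?_⟩
  have : a ∈ segment ℝ c d := by
    refine ⟨wc / (wc + wd), wd / (wc + wd), div_nonneg h3 (by linarith), div_nonneg h4 (by linarith), by rw [← add_div, div_self (ne_of_gt (by linarith : (0:ℝ) < wc + wd))], ?_⟩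
    have hcd0 : ((wc + wd : ℝ) : ℂ) ≠ 0 := by
      rw [hsum2]; exact_mod_cast ne_of_gt hwa
    simp only [Complex.real_smul]
    push_cast
    rw [div_mul_eq_mul_div, div_mul_eq_mul_div, ← add_div, div_eq_iff (by push_cast at hcd0; exact hcd0)]
    push_cast at hrep2
    linear_combination -hrep2
  exact this

lemma offLine (a b p q : ℂ) (hab : dist a b = 2) (hpa : dist p a ≤ 2) (hpb : dist p b ≤ 2)
    (hpq : dist p q = 2) (hqa : dist q a ≤ 2) (hqb : dist q b ≤ 2)
    (hpa' : p ≠ a) (hpb' : p ≠ b) : crossAB a b p ≠ 0 := by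
  intro hc
  have hab' : a ≠ b := by
    intro h; rw [h, _root_.dist_self] at hab; norm_num at hab
  -- p lies on the line through a and b
  obtain ⟨t, hp⟩ : ∃ t : ℝ, p = (1 - t) • a + t • b := by
    have hor : b.re - a.re ≠ 0 ∨ b.im - a.im ≠ 0 := by
      by_contra h
      push_neg at h
      exact hab' (Complex.ext (by linarith [h.1]) (by linarith [h.2]))
    rcases hor with h | h
    · refine ⟨(p.re - a.re) / (b.re - a.re), ?_⟩
      apply Complex.ext
      · simp only [Complex.add_re, Complex.real_smul, Complex.mul_re, Complex.ofReal_re,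
          Complex.ofReal_im]
        field_simp
        ring
      · simp only [Complex.add_im, Complex.real_smul, Complex.mul_im, Complex.ofReal_re,
          Complex.ofReal_im]
        simp only [crossAB] at hc
        field_simp
        nlinarith [hc]
    · refine ⟨(p.im - a.im) / (b.im - a.im), ?_⟩
      apply Complex.ext
      · simp only [Complex.add_re, Complex.real_smul, Complex.mul_re, Complex.ofReal_re,
          Complex.ofReal_im]
        simp only [crossAB] at hc
        field_simp
        nlinarith [hc]
      · simp only [Complex.add_im, Complex.real_smul, Complex.mul_im, Complex.ofReal_re,
          Complex.ofReal_im]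
        field_simp
        ring
  -- bounds on t
  have hd1 : dist a p = |t| * 2 := by
    have h : a - p = t • (a - b) := by rw [hp]; module
    rw [dist_eq_norm, h, norm_smul, Real.norm_eq_abs, ← dist_eq_norm, hab]
  have hd2 : dist b p = |1 - t| * 2 := by
    have h : b - p = (1 - t) • (b - a) := by rw [hp]; module
    rw [dist_eq_norm, h, norm_smul, Real.norm_eq_abs, ← dist_eq_norm, _root_.dist_comm b a, hab]
  have ht1 : |t| ≤ 1 := by rw [_root_.dist_comm a p] at hd1; nlinarith [hpa, hd1]
  have ht2 : |1 - t| ≤ 1 := by rw [_root_.dist_comm b p] at hd2; nlinarith [hpb, hd2]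
  have ht0 : 0 ≤ t ∧ t ≤ 1 := by
    constructor <;> [skip; skip] <;> cases' abs_le.mp ht1 with h1 h2 <;>
      cases' abs_le.mp ht2 with h3 h4 <;> linarith
  have htne0 : t ≠ 0 := by
    intro h; apply hpa'; rw [hp, h]; simp
  have htne1 : t ≠ 1 := by
    intro h; apply hpb'; rw [hp, h]; simp
  have ht0' : 0 < t := lt_of_le_of_ne ht0.1 (Ne.symm htne0)
  have ht1' : t < 1 := lt_of_le_of_ne ht0.2 htne1
  -- main argument
  have key : q - p = (1 - t) • (q - a) + t • (q - b) := by rw [hp]; module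
  have hqp : dist q p = 2 := by rw [_root_.dist_comm]; exact hpq
  have hineq : 2 ≤ (1 - t) * dist q a + t * dist q b := by
    calc (2:ℝ) = ‖q - p‖ := by rw [← dist_eq_norm, hqp]
    _ = ‖(1 - t) • (q - a) + t • (q - b)‖ := by rw [key]
    _ ≤ ‖(1 - t) • (q - a)‖ + ‖t • (q - b)‖ := norm_add_le _ _
    _ = (1 - t) * dist q a + t * dist q b := by
        rw [norm_smul, norm_smul, Real.norm_eq_abs, Real.norm_eq_abs,
          abs_of_nonneg (by linarith), abs_of_nonneg ht0.1, dist_eq_norm, dist_eq_norm]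
  have hqa2 : dist q a = 2 := by nlinarith [hqa, hqb]
  have hqb2 : dist q b = 2 := by nlinarith [hqa, hqb]
  have heq : ‖(1 - t) • (q - a) + t • (q - b)‖ = ‖(1 - t) • (q - a)‖ + ‖t • (q - b)‖ := by
    have h1 : ‖(1 - t) • (q - a)‖ = (1 - t) * 2 := by
      rw [norm_smul, Real.norm_eq_abs, abs_of_nonneg (by linarith), ← dist_eq_norm, hqa2]
    have h2 : ‖t • (q - b)‖ = t * 2 := by
      rw [norm_smul, Real.norm_eq_abs, abs_of_nonneg ht0.1, ← dist_eq_norm, hqb2]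
    have h3 : ‖(1 - t) • (q - a) + t • (q - b)‖ = 2 := by
      rw [← key, ← dist_eq_norm, hqp]
    rw [h1, h2, h3]; ring
  have hray : SameRay ℝ ((1 - t) • (q - a)) (t • (q - b)) := sameRay_iff_norm_add.mpr heq
  have hu : (1 - t) • (q - a) ≠ 0 := by
    apply smul_ne_zero (by linarith)
    intro h
    rw [sub_eq_zero] at h
    rw [h] at hqa2; rw [_root_.dist_self] at hqa2; norm_num at hqa2
  have hv : t • (q - b) ≠ 0 := by
    apply smul_ne_zero (ne_of_gt ht0')
    intro h
    rw [sub_eq_zero] at h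
    rw [h] at hqb2; rw [_root_.dist_self] at hqb2; norm_num at hqb2
  obtain ⟨r1, r2, hr1, hr2, hrr⟩ := hray.exists_pos hu hv
  -- r1 • (1-t) • (q-a) = r2 • t • (q-b); take norms
  have hnorm : r1 * ((1 - t) * 2) = r2 * (t * 2) := by
    have e1 : ‖r1 • (1 - t) • (q - a)‖ = r1 * ((1 - t) * 2) := by
      rw [norm_smul, norm_smul, Real.norm_eq_abs, Real.norm_eq_abs, abs_of_pos hr1,
        abs_of_nonneg (by linarith : (0:ℝ) ≤ 1 - t), ← dist_eq_norm, hqa2]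
    have e2 : ‖r2 • t • (q - b)‖ = r2 * (t * 2) := by
      rw [norm_smul, norm_smul, Real.norm_eq_abs, Real.norm_eq_abs, abs_of_pos hr2,
        abs_of_nonneg ht0.1, ← dist_eq_norm, hqb2]
    rw [← e1, ← e2, hrr]
  have hρ : r1 * (1 - t) = r2 * t := by linarith
  have hρpos : 0 < r1 * (1 - t) := mul_pos hr1 (by linarith)
  have hfinal : q - a = q - b := by
    have h1 : (r1 * (1 - t)) • (q - a) = (r2 * t) • (q - b) := by
      rw [← smul_smul, ← smul_smul]; exact hrr
    rw [← hρ] at h1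
    exact smul_right_injective ℂ (ne_of_gt hρpos) h1
  exact hab' (sub_right_inj.mp hfinal)

lemma diam_inter (a b c d : ℂ) (hab : dist a b = 2) (hcd : dist c d = 2)
    (hac : dist a c ≤ 2) (had : dist a d ≤ 2) (hbc : dist b c ≤ 2) (hbd : dist b d ≤ 2) :
    ∃ y, y ∈ segment ℝ a b ∧ y ∈ segment ℝ c d := by
  have hdep : ¬ LinearIndependent ℝ ![b - a, c - a, d - a] := by
    intro h
    have := h.fintype_card_le_finrank
    simp [Complex.finrank_real_complex] at this
  obtain ⟨g, hg, i, hgi⟩ := Fintype.not_linearIndependent_iff.mp hdep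
  rw [Fin.sum_univ_three] at hg
  simp only [Matrix.cons_val_zero, Matrix.cons_val_one, Matrix.head_cons, Matrix.cons_val_two,
    Matrix.tail_cons] at hg
  set w0 : ℝ := -(g 0 + g 1 + g 2) with hw0
  set w1 : ℝ := g 0 with hw1
  set w2 : ℝ := g 1 with hw2
  set w3 : ℝ := g 2 with hw3
  have hsum : w0 + w1 + w2 + w3 = 0 := by rw [hw0, hw1, hw2, hw3]; ring
  have hrep : (w0 : ℂ) * a + (w1 : ℂ) * b + (w2 : ℂ) * c + (w3 : ℂ) * d = 0 := by
    have hg' : (g 0 : ℂ) * (b - a) + (g 1 : ℂ) * (c - a) + (g 2 : ℂ) * (d - a) = 0 := by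
      simpa [Complex.real_smul] using hg
    rw [hw0, hw1, hw2, hw3]
    push_cast
    linear_combination hg'
  have hex : ¬ (w1 = 0 ∧ w2 = 0 ∧ w3 = 0) := by
    rintro ⟨e1, e2, e3⟩
    fin_cases i <;> simp_all
  clear hg hgi hw0 hw1 hw2 hw3
  -- case analysis on signs
  have habs : dist b a = 2 := by rwa [_root_.dist_comm]
  have hdcs : dist d c = 2 := by rwa [_root_.dist_comm]
  have hca : dist c a ≤ 2 := by rwa [_root_.dist_comm]
  have hda : dist d a ≤ 2 := by rwa [_root_.dist_comm]
  have hcb : dist c b ≤ 2 := by rwa [_root_.dist_comm]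
  have hdb : dist d b ≤ 2 := by rwa [_root_.dist_comm]
  have hsC : (w0 : ℂ) + w1 + w2 + w3 = 0 := by exact_mod_cast hsum
  rcases le_or_gt 0 w0 with h0 | h0 <;> rcases le_or_gt 0 w1 with h1 | h1 <;>
    rcases le_or_gt 0 w2 with h2 | h2 <;> rcases le_or_gt 0 w3 with h3 | h3
  -- (+,+,+,+)
  · exact absurd ⟨by linarith, by linarith, by linarith⟩ hex
  -- (+,+,+,-)
  · obtain ⟨y, hy1, hy2⟩ := vtxW d c a b hdcs hac hbc (-w3) w2 w0 w1 (by linarith) h2 h0 h1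
      (by linarith) (by push_cast; linear_combination -hrep)
    exact ⟨y, hy2, (segment_symm ℝ d c) ▸ hy1⟩
  -- (+,+,-,+)
  · obtain ⟨y, hy1, hy2⟩ := vtxW c d a b hcd had hbd (-w2) w3 w0 w1 (by linarith) h3 h0 h1
      (by linarith) (by push_cast; linear_combination -hrep)
    exact ⟨y, hy2, hy1⟩
  -- (+,+,-,-) : [a,b] vs [c,d] directly
  · have hW : 0 < w0 + w1 := by linarith
    set x : ℂ := ((w0 : ℂ) * a + (w1 : ℂ) * b) * (((w0 + w1 : ℝ) : ℂ))⁻¹ with hx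
    have hWc : ((w0 + w1 : ℝ) : ℂ) ≠ 0 := by exact_mod_cast ne_of_gt hW
    have hx1 : ((w0 + w1 : ℝ) : ℂ) * x = (w0 : ℂ) * a + (w1 : ℂ) * b := by
      rw [hx, mul_comm, mul_assoc, inv_mul_cancel₀ hWc, mul_one]
    have hx2 : ((-w2 + -w3 : ℝ) : ℂ) * x = ((-w2 : ℝ) : ℂ) * c + ((-w3 : ℝ) : ℂ) * d := by
      have : ((-w2 + -w3 : ℝ) : ℂ) = ((w0 + w1 : ℝ) : ℂ) := by push_cast; linear_combination -hsC
      rw [this, hx1]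
      push_cast
      linear_combination hrep
    exact ⟨x, segMk a b x w0 w1 h0 h1 hW hx1,
      segMk c d x (-w2) (-w3) (by linarith) (by linarith) (by linarith) hx2⟩
  -- (+,-,+,+) : vertex b
  · obtain ⟨y, hy1, hy2⟩ := vtxW b a c d habs hca hda (-w1) w0 w2 w3 (by linarith) h0 h2 h3
      (by linarith) (by push_cast; linear_combination -hrep)
    exact ⟨y, (segment_symm ℝ b a) ▸ hy1, hy2⟩
  -- (+,-,+,-) : pairing {a,c} | {b,d}
  · exact crossW a b c d hab hcd hac hbd w0 (-w1) w2 (-w3) h0 (by linarith) h2 (by linarith)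
      (by linarith) (by linarith) (by push_cast; linear_combination hrep)
  -- (+,-,-,+) : pairing {a,d} | {b,c}
  · obtain ⟨y, hy1, hy2⟩ := crossW a b d c hab hdcs had hbc w0 (-w1) w3 (-w2) h0 (by linarith)
      h3 (by linarith) (by linarith) (by linarith) (by push_cast; linear_combination hrep)
    exact ⟨y, hy1, (segment_symm ℝ d c) ▸ hy2⟩
  -- (+,-,-,-) : vertex a
  · exact vtxW a b c d hab hcb hdb w0 (-w1) (-w2) (-w3) (by linarith) (by linarith) (by linarith)
      (by linarith) (by linarith) (by push_cast; linear_combination hrep)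
  -- (-,+,+,+) : vertex a
  · exact vtxW a b c d hab hcb hdb (-w0) w1 w2 w3 (by linarith) h1 h2 h3 (by linarith)
      (by push_cast; linear_combination -hrep)
  -- (-,+,+,-) : pairing {b,c} | {a,d}
  · obtain ⟨y, hy1, hy2⟩ := crossW a b d c hab hdcs had hbc (-w0) w1 (-w3) w2 (by linarith) h1
      (by linarith) h2 (by linarith) (by linarith) (by push_cast; linear_combination -hrep)
    exact ⟨y, hy1, (segment_symm ℝ d c) ▸ hy2⟩
  -- (-,+,-,+) : pairing {b,d} | {a,c}
  · exact crossW a b c d hab hcd hac hbd (-w0) w1 (-w2) w3 (by linarith) h1 (by linarith) h3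
      (by linarith) (by linarith) (by push_cast; linear_combination -hrep)
  -- (-,+,-,-) : vertex b
  · obtain ⟨y, hy1, hy2⟩ := vtxW b a c d habs hca hda w1 (-w0) (-w2) (-w3) (by linarith)
      (by linarith) (by linarith) (by linarith) (by linarith)
      (by push_cast; linear_combination hrep)
    exact ⟨y, (segment_symm ℝ b a) ▸ hy1, hy2⟩
  -- (-,-,+,+) : [c,d] vs [a,b]
  · have hW : 0 < w2 + w3 := by linarith
    set x : ℂ := ((w2 : ℂ) * c + (w3 : ℂ) * d) * (((w2 + w3 : ℝ) : ℂ))⁻¹ with hx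
    have hWc : ((w2 + w3 : ℝ) : ℂ) ≠ 0 := by exact_mod_cast ne_of_gt hW
    have hx1 : ((w2 + w3 : ℝ) : ℂ) * x = (w2 : ℂ) * c + (w3 : ℂ) * d := by
      rw [hx, mul_comm, mul_assoc, inv_mul_cancel₀ hWc, mul_one]
    have hx2 : ((-w0 + -w1 : ℝ) : ℂ) * x = ((-w0 : ℝ) : ℂ) * a + ((-w1 : ℝ) : ℂ) * b := by
      have : ((-w0 + -w1 : ℝ) : ℂ) = ((w2 + w3 : ℝ) : ℂ) := by push_cast; linear_combination -hsC
      rw [this, hx1]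
      push_cast
      linear_combination hrep
    exact ⟨x, segMk a b x (-w0) (-w1) (by linarith) (by linarith) (by linarith) hx2,
      segMk c d x w2 w3 h2 h3 hW hx1⟩
  -- (-,-,+,-) : vertex c
  · obtain ⟨y, hy1, hy2⟩ := vtxW c d a b hcd had hbd w2 (-w3) (-w0) (-w1) (by linarith)
      (by linarith) (by linarith) (by linarith) (by linarith)
      (by push_cast; linear_combination hrep)
    exact ⟨y, hy2, hy1⟩
  -- (-,-,-,+) : vertex d
  · obtain ⟨y, hy1, hy2⟩ := vtxW d c a b hdcs hac hbc w3 (-w2) (-w0) (-w1) (by linarith)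
      (by linarith) (by linarith) (by linarith) (by linarith)
      (by push_cast; linear_combination hrep)
    exact ⟨y, hy2, (segment_symm ℝ d c) ▸ hy1⟩
  -- (-,-,-,-)
  · linarith

lemma support_get_eq_getVert {V : Type*} {G : SimpleGraph V} :
    ∀ {u v : V} (w : G.Walk u v) (i : ℕ) (h : i < w.support.length),
      w.support.get ⟨i, h⟩ = w.getVert i := by
  intro u v w
  induction w with
  | nil =>
    intro i h
    simp only [Walk.support_nil, List.length_cons, List.length_nil] at h
    have : i = 0 := by omega
    subst this; rfl
  | cons hadj p ih =>
    intro i h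
    cases i with
    | zero => rfl
    | succ i =>
      rw [Walk.getVert_cons_succ]
      simp only [Walk.support_cons, List.length_cons] at h ⊢
      exact ih i (by simpa using h)

lemma cycle_getVert_inj {V : Type*} {G : SimpleGraph V} {v : V} {w : G.Walk v v}
    (hc : w.IsCycle) : ∀ i j, i < w.length → j < w.length →
      w.getVert i = w.getVert j → i = j := by
  have hnd : w.support.tail.Nodup := hc.support_nodup
  have hlen : w.support.length = w.length + 1 := Walk.length_support w
  have hcons : w.support = v :: w.support.tail := Walk.support_eq_cons w
  have htlen : w.support.tail.length = w.length := by
    have := congrArg List.length hcons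
    simp only [List.length_cons] at this
    omega
  have hget : ∀ k (hk : k < w.length), w.support.tail.get ⟨k, by omega⟩ = w.getVert (k + 1) := by
    intro k hk
    have h1 : k + 1 < w.support.length := by omega
    rw [List.get_tail w.support k (by omega) h1]
    exact support_get_eq_getVert w (k + 1) h1
  have key : ∀ k l, k < w.length → l < w.length → w.getVert (k+1) = w.getVert (l+1) → k = l := by
    intro k l hk hl he
    rw [← hget k hk, ← hget l hl] at he
    have := List.Nodup.get_inj_iff hnd |>.mp he
    simpa using this
  intro i j hi hj hij
  match i, j with
  | 0, 0 => rfl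
  | 0, (j+1) =>
    exfalso
    have hv : w.getVert w.length = w.getVert 0 := by
      rw [Walk.getVert_length, Walk.getVert_zero]
    have h3 : 3 ≤ w.length := hc.three_le_length
    have : w.length - 1 + 1 = w.length := by omega
    have := key j (w.length - 1) (by omega) (by omega)
      (by rw [this, hv, ← hij])
    omega
  | (i+1), 0 =>
    exfalso
    have hv : w.getVert w.length = w.getVert 0 := by
      rw [Walk.getVert_length, Walk.getVert_zero]
    have h3 : 3 ≤ w.length := hc.three_le_length
    have heq : w.length - 1 + 1 = w.length := by omega
    have := key i (w.length - 1) (by omega) (by omega)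
      (by rw [heq, hv, hij])
    omega
  | (i+1), (j+1) =>
    have := key i j (by omega) (by omega) hij
    omega

lemma Dmax_pos (n : ℕ) (hn : 2 ≤ n) : 0 < Dmax n := by
  classical
  have hbdd : BddAbove {d : ℝ | ∃ z : Fin n → ℂ, Admissible n z ∧ Delta n z = d} := by
    refine ⟨2 ^ (Finset.univ.filter (fun p : Fin n × Fin n => p.1 ≠ p.2)).card, ?_⟩
    rintro d ⟨y, hy, rfl⟩
    calc Delta n y ≤ ∏ _p ∈ Finset.univ.filter (fun p : Fin n × Fin n => p.1 ≠ p.2), (2:ℝ) :=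
      Finset.prod_le_prod (fun _ _ => dist_nonneg) (fun p _ => hy p.1 p.2)
    _ = _ := by rw [Finset.prod_const]
  set u : Fin n → ℂ := fun i => ((i : ℕ) : ℂ) / (n : ℂ) with hu
  have hn0 : (0:ℝ) < n := by positivity
  have hdist : ∀ i j : Fin n, dist (u i) (u j) = |((i:ℕ):ℝ) - ((j:ℕ):ℝ)| / n := by
    intro i j
    rw [hu]
    simp only [dist_eq_norm]
    rw [div_sub_div_same, norm_div]
    congr 1
    · rw [show ((i:ℕ):ℂ) - ((j:ℕ):ℂ) = ((((i:ℕ):ℝ) - ((j:ℕ):ℝ) : ℝ) : ℂ) by push_cast; ring,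
        Complex.norm_real, Real.norm_eq_abs]
    · rw [show ((n:ℕ):ℂ) = (((n:ℝ)):ℂ) by push_cast; ring, Complex.norm_real,
        Real.norm_eq_abs, abs_of_pos hn0]
  have hadm : Admissible n u := by
    intro i j
    rw [hdist i j, div_le_iff₀ hn0]
    have h1 : ((i:ℕ):ℝ) < n := by exact_mod_cast i.isLt
    have h2 : ((j:ℕ):ℝ) < n := by exact_mod_cast j.isLt
    have h3 : (0:ℝ) ≤ ((i:ℕ):ℝ) := by positivity
    have h4 : (0:ℝ) ≤ ((j:ℕ):ℝ) := by positivity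
    rw [abs_le]
    constructor <;> nlinarith
  have hpos : 0 < Delta n u := by
    apply Finset.prod_pos
    intro p hp
    simp only [Finset.mem_filter, Finset.mem_univ, true_and] at hp
    rw [hdist]
    apply div_pos _ hn0
    rw [abs_pos, sub_ne_zero]
    intro h
    exact hp (Fin.ext (by exact_mod_cast h))
  calc (0:ℝ) < Delta n u := hpos
  _ ≤ Dmax n := le_csSup hbdd ⟨u, hadm, rfl⟩

lemma maximizer_injective (n : ℕ) (hn : 2 ≤ n) (z : Fin n → ℂ)
    (hmax : Delta n z = Dmax n) : Function.Injective z := by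
  intro i j hij
  by_contra hne
  have h0 : Delta n z = 0 := by
    apply Finset.prod_eq_zero (i := (i, j))
    · simp only [Finset.mem_filter, Finset.mem_univ, true_and]
      exact hne
    · simp [hij]
  rw [hmax] at h0
  exact absurd h0 (ne_of_gt (Dmax_pos n hn))

theorem stmt8 (n : ℕ) (hn : 2 ≤ n) (z : Fin n → ℂ)
    (hadm : Admissible n z) (hmax : Delta n z = Dmax n) :
    ∀ (v : Fin n) (w : (diamGraph n z).Walk v v), w.IsCycle → Odd w.length := by
  intro v w hc
  by_contra hodd
  rw [Nat.not_odd_iff_even] at hodd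
  have hinj : Function.Injective z := maximizer_injective n hn z hmax
  set m := w.length with hm
  have hm3 : 3 ≤ m := hc.three_le_length
  have hm4 : 4 ≤ m := by
    rcases hodd with ⟨r, hr⟩; omega
  have ginj := cycle_getVert_inj hc
  -- adjacency distances
  have hadj : ∀ i, i < m → dist (z (w.getVert i)) (z (w.getVert (i+1))) = 2 := by
    intro i hi
    exact And.right (w.adj_getVert_succ hi)
  set a := z (w.getVert 0) with ha
  set b := z (w.getVert 1) with hb
  have hab : dist a b = 2 := hadj 0 (by omega)
  set S : ℕ → ℝ := fun i => crossAB a b (z (w.getVert i)) with hS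
  -- vertices 2..m-1 are off the line ab
  have hoff : ∀ i, 2 ≤ i → i < m → S i ≠ 0 := by
    intro i h2 him
    apply offLine a b (z (w.getVert i)) (z (w.getVert (i+1))) hab (hadm _ _) (hadm _ _)
      (hadj i him) (hadm _ _) (hadm _ _)
    · intro he
      have := ginj i 0 him (by omega) (hinj he)
      omega
    · intro he
      have := ginj i 1 him (by omega) (hinj he)
      omega
  -- sign product lemma
  have combo_zero : ∀ (p q t : ℝ), 0 ≤ t → t ≤ 1 → (1 - t) * p + t * q = 0 → p * q ≤ 0 := by
    intro p q t ht0 ht1 hz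
    rcases le_or_gt p 0 with hp | hp <;> rcases le_or_gt q 0 with hq | hq
    · have h1 : (1 - t) * p ≤ 0 := mul_nonpos_of_nonneg_of_nonpos (by linarith) hp
      have h2 : t * q ≤ 0 := mul_nonpos_of_nonneg_of_nonpos ht0 hq
      have h3 : (1 - t) * p = 0 := by linarith
      have h4 : t * q = 0 := by linarith
      rcases mul_eq_zero.mp h3 with h | h
      · rcases mul_eq_zero.mp h4 with h' | h'
        · nlinarith
        · rw [h']; simp
      · rw [h]; simp
    · exact mul_nonpos_of_nonpos_of_nonneg hp hq.le
    · exact mul_nonpos_of_nonneg_of_nonpos hp.le hq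
    · have h1 : 0 ≤ (1 - t) * p := mul_nonneg (by linarith) hp.le
      have h2 : 0 ≤ t * q := mul_nonneg ht0 hq.le
      have h3 : (1 - t) * p = 0 := by linarith
      have h4 : t * q = 0 := by linarith
      rcases mul_eq_zero.mp h3 with h | h
      · rcases mul_eq_zero.mp h4 with h' | h'
        · nlinarith
        · nlinarith
      · nlinarith
  -- alternation
  have hstep : ∀ i, 2 ≤ i → i + 1 < m → S i * S (i+1) < 0 := by
    intro i h2 him
    obtain ⟨y, hy1, hy2⟩ := diam_inter a b (z (w.getVert i)) (z (w.getVert (i+1))) hab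
      (hadj i (by omega)) (hadm _ _) (hadm _ _) (hadm _ _) (hadm _ _)
    obtain ⟨α, β, hα, hβ, hαβ, hyr⟩ := hy1
    have hy0 : crossAB a b y = 0 := by
      rw [crossAB_combo hαβ hyr.symm, crossAB_left, crossAB_right]; ring
    obtain ⟨γ, δ, hγ, hδ, hγδ, hyr2⟩ := hy2
    have hy1' : crossAB a b y = γ * S i + δ * S (i+1) := crossAB_combo hγδ hyr2.symm
    have hle : S i * S (i+1) ≤ 0 := by
      apply combo_zero _ _ δ hδ (by linarith)
      have hγ1 : 1 - δ = γ := by linarith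
      rw [hγ1, ← hy1', hy0]
    have hne : S i * S (i+1) ≠ 0 :=
      mul_ne_zero (hoff i h2 (by omega)) (hoff (i+1) (by omega) (by omega))
    exact lt_of_le_of_ne hle hne
  -- induction on parity
  have halt : ∀ k, 2 + k < m → 0 < (-1:ℝ)^k * (S 2 * S (2+k)) := by
    intro k
    induction k with
    | zero =>
      intro h
      simpa using mul_self_pos.mpr (hoff 2 le_rfl (by omega))
    | succ k ih =>
      intro h
      have A := ih (by omega)
      have B := hstep (2+k) (by omega) (by omega)
      have hS2 : S (2+k) ≠ 0 := hoff (2+k) (by omega) (by omega)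
      have hSS : 0 < S (2+k) * S (2+k) := mul_self_pos.mpr hS2
      rw [show 2 + (k + 1) = 2 + k + 1 by omega, pow_succ]
      nlinarith [mul_pos A (by linarith : (0:ℝ) < -(S (2+k) * S (2+k+1)))]
  have hlast : S 2 * S (m-1) < 0 := by
    have hM : 2 + (m - 3) = m - 1 := by omega
    have h := halt (m-3) (by omega)
    rw [hM] at h
    have hodd' : Odd (m - 3) := by
      rcases hodd with ⟨r, hr⟩
      exact ⟨r - 2, by omega⟩
    rw [hodd'.neg_one_pow] at h
    linarith
  -- final: edges (1,2) and (m-1, m) intersect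
  have hm1 : m - 1 + 1 = m := by omega
  have hadjm : dist (z (w.getVert (m-1))) (z (w.getVert m)) = 2 := by
    have := hadj (m-1) (by omega)
    rwa [hm1] at this
  obtain ⟨y, hy1, hy2⟩ := diam_inter (z (w.getVert 1)) (z (w.getVert 2))
    (z (w.getVert (m-1))) (z (w.getVert m)) (hadj 1 (by omega)) hadjm
    (hadm _ _) (hadm _ _) (hadm _ _) (hadm _ _)
  obtain ⟨α, β, hα, hβ, hαβ, hyr⟩ := hy1
  obtain ⟨γ, δ, hγ, hδ, hγδ, hyr2⟩ := hy2
  have hvm : w.getVert m = w.getVert 0 := by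
    rw [hm, Walk.getVert_length, Walk.getVert_zero]
  have e1 : crossAB a b y = β * S 2 := by
    rw [crossAB_combo hαβ hyr.symm]
    have : crossAB a b (z (w.getVert 1)) = 0 := crossAB_right a b
    rw [this]; ring
  have e2 : crossAB a b y = γ * S (m-1) := by
    rw [crossAB_combo hγδ hyr2.symm]
    have : crossAB a b (z (w.getVert m)) = 0 := by rw [hvm]; exact crossAB_left a b
    rw [this]; ring
  have hprod : (β * S 2) * (γ * S (m-1)) ≤ 0 := by
    have : (β * S 2) * (γ * S (m-1)) = (β * γ) * (S 2 * S (m-1)) := by ring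
    rw [this]
    exact mul_nonpos_of_nonneg_of_nonpos (mul_nonneg hβ hγ) hlast.le
  have hX0 : β * S 2 = 0 := by
    have hXY : β * S 2 = γ * S (m-1) := by rw [← e1, ← e2]
    nlinarith [hprod, sq_nonneg (β * S 2)]
  have hY0 : γ * S (m-1) = 0 := by rw [← e1] at *; nlinarith [hX0]
  have hβ0 : β = 0 := by
    rcases mul_eq_zero.mp hX0 with h | h
    · exact h
    · exact absurd h (hoff 2 le_rfl (by omega))
  have hγ0 : γ = 0 := by
    rcases mul_eq_zero.mp hY0 with h | h
    · exact h
    · exact absurd h (hoff (m-1) (by omega) (by omega))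
  have hy_eq1 : y = z (w.getVert 1) := by
    rw [← hyr, hβ0]
    have : α = 1 := by linarith
    rw [this]; simp
  have hy_eq2 : y = z (w.getVert m) := by
    rw [← hyr2, hγ0]
    have : δ = 1 := by linarith
    rw [this]; simp
  have : z (w.getVert 1) = a := by rw [← hy_eq1, hy_eq2, hvm]
  rw [← hb] at this
  rw [this, _root_.dist_self] at hab
  norm_num at hab
end
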